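/- Let $V$ be a finite dimensional real inner product space with a symmetric positive definite operator $A$. Then the function $f(\phi) = e^{-\frac{1}{2}\langle A\phi,\phi\rangle}$ is integrable on $V$ with $\int_V f\,d\phi = (2\pi)^{\dim V/2}(\det A)^{-1/2}$, and consequently the norm of the partition function satisfies $\|Z_{K,L}\|^2_{H(L)} = Z_{\widetilde K,\varnothing}$, where $\widetilde K = K\cup_L K$ is the double of $K$ along $L$: explicitly, $\int_{C^0(L,E)} Z_{K,L}(\eta)^2 e^{-S_L(\eta)}\,d\eta = \int_{C^0(\widetilde K,E)} e^{-S_{\widetilde K}(\phi)}\,d\phi$. -/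

import Mathlib

open Matrix MeasureTheory
open scoped MatrixOrder

/-- (i) For a symmetric positive definite `A`, the Gaussian `e^{-½⟨Aφ,φ⟩}` is
integrable with `∫ e^{-½⟨Aφ,φ⟩} dφ = (2π)^{dim V/2}(det A)^{-1/2}`; and
(ii) consequently, if the action on the double `K̃ = K ∪_L K` decomposes as
`S_{K̃}(φ⁺,φ⁻,η) = S_{K,L}(φ⁺;η) + S_{K,L}(φ⁻;η) + S_L(η)` for matching boundary
trace `η`, then `‖Z_{K,L}‖²_{H(L)} = Z_{K̃,∅}`:
`∫ Z_{K,L}(η)² e^{-S_L(η)} dη = ∫ e^{-S_{K̃}(φ)} dφ`. -/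

theorem gauss {ι : Type*} [Fintype ι] [DecidableEq ι]
    (A : Matrix ι ι ℝ) (hA : A.PosDef) :
    Integrable (fun φ : ι → ℝ => Real.exp (-((1 / 2) * (A.mulVec φ ⬝ᵥ φ)))) ∧
      ∫ φ : ι → ℝ, Real.exp (-((1 / 2) * (A.mulVec φ ⬝ᵥ φ)))
        = Real.sqrt ((2 * Real.pi) ^ Fintype.card ι / A.det) := by
  classical
  set B := CFC.sqrt A with hBdef
  have hBB : B * B = A := CFC.sqrt_mul_sqrt_self A hA.posSemidef.nonneg
  have hBsymm : Bᵀ = B := by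
    have := (CFC.sqrt_nonneg A).posSemidef.1
    rwa [Matrix.IsHermitian, Matrix.conjTranspose_eq_transpose_of_trivial] at this
  have hdetA : (0:ℝ) < A.det := hA.det_pos
  have hdetB2 : B.det * B.det = A.det := by rw [← Matrix.det_mul, hBB]
  have hdetB : B.det ≠ 0 := by
    intro h; rw [h, zero_mul] at hdetB2; exact hdetA.ne' hdetB2.symm
  have habs : |B.det| = Real.sqrt A.det := by
    rw [← Real.sqrt_sq_eq_abs, sq, hdetB2]
  have key : ∀ φ : ι → ℝ, A.mulVec φ ⬝ᵥ φ = ∑ i, (B.mulVec φ i) ^ 2 := by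
    intro φ
    have : A.mulVec φ = B.mulVec (B.mulVec φ) := by
      rw [Matrix.mulVec_mulVec, hBB]
    rw [this, dotProduct_comm, Matrix.dotProduct_mulVec, ← Matrix.mulVec_transpose,
      hBsymm, dotProduct]
    simp [sq]
  set g : (ι → ℝ) → ℝ := fun ψ => ∏ i, Real.exp (-(1/2 : ℝ) * (ψ i) ^ 2) with hg
  have hgcont : Continuous g := by
    apply continuous_finset_prod
    intro i _
    exact (Real.continuous_exp.comp (by continuity))
  have hgint : Integrable g := by
    apply Integrable.fintype_prod (f := fun _ x => Real.exp (-(1/2 : ℝ) * x ^ 2))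
    intro i; exact integrable_exp_neg_mul_sq (by norm_num)
  have hgval : ∫ ψ, g ψ = Real.sqrt ((2 * Real.pi) ^ Fintype.card ι) := by
    rw [hg]; beta_reduce; rw [volume_pi, integral_fintype_prod_eq_pow (ι := ι) (fun x : ℝ => Real.exp (-(1/2 : ℝ) * x ^ 2)),
      integral_gaussian]
    rw [show Real.pi / (1/2 : ℝ) = 2 * Real.pi by ring]
    have h2 : (2 * Real.pi) ^ Fintype.card ι
        = ((Real.sqrt (2 * Real.pi)) ^ Fintype.card ι) ^ 2 := by
      rw [← pow_mul, mul_comm (Fintype.card ι) 2, pow_mul, Real.sq_sqrt (by positivity)]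
    rw [h2, Real.sqrt_sq (by positivity)]
  set f : (ι → ℝ) →ₗ[ℝ] ι → ℝ := Matrix.toLin' B with hf
  have hdetf : LinearMap.det f = B.det := by simp [hf]
  have hmap : Measure.map f volume = ENNReal.ofReal |B.det|⁻¹ • volume := by
    rw [← abs_inv]
    have := Real.map_linearMap_volume_pi_eq_smul_volume_pi (f := f) (by rw [hdetf]; exact hdetB)
    rwa [hdetf] at this
  have hfmeas : Measurable f := f.continuous_of_finiteDimensional.measurable
  have hcomp : ∀ φ, g (f φ) = Real.exp (-((1 / 2) * (A.mulVec φ ⬝ᵥ φ))) := by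
    intro φ
    rw [key, hg]
    simp only [Matrix.toLin'_apply, hf]
    rw [← Real.exp_sum]
    congr 1
    rw [Finset.mul_sum, ← Finset.sum_neg_distrib]
    exact Finset.sum_congr rfl (fun i _ => by ring)
  have hginmap : Integrable g (Measure.map f volume) := by
    rw [hmap]; exact hgint.smul_measure ENNReal.ofReal_ne_top
  have hintf : Integrable (fun φ : ι → ℝ => g (f φ)) :=
    (integrable_map_measure hgcont.aestronglyMeasurable hfmeas.aemeasurable).mp hginmap
  constructor
  · exact hintf.congr (Filter.Eventually.of_forall hcomp)
  · have : ∫ φ : ι → ℝ, Real.exp (-((1 / 2) * (A.mulVec φ ⬝ᵥ φ))) = ∫ φ, g (f φ) := by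
      exact integral_congr_ae (Filter.Eventually.of_forall (fun φ => (hcomp φ).symm))
    rw [this, ← integral_map hfmeas.aemeasurable hgcont.aestronglyMeasurable, hmap,
      integral_smul_measure, ENNReal.toReal_ofReal (by positivity), habs, hgval,
      Real.sqrt_div (by positivity), smul_eq_mul]
    ring


theorem part2 {ι0 ιL : Type*} [Fintype ι0] [Fintype ιL]
    (SKL : (ι0 → ℝ) → (ιL → ℝ) → ℝ) (SL : (ιL → ℝ) → ℝ)
    (Sdbl : ((ι0 → ℝ) × (ι0 → ℝ)) × (ιL → ℝ) → ℝ)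
    (hdbl : ∀ (φp φm : ι0 → ℝ) (η : ιL → ℝ),
      Sdbl ((φp, φm), η) = SKL φp η + SKL φm η + SL η)
    (hint : Integrable
      (fun p : ((ι0 → ℝ) × (ι0 → ℝ)) × (ιL → ℝ) => Real.exp (-(Sdbl p)))) :
    ∫ η : ιL → ℝ, (∫ φ : ι0 → ℝ, Real.exp (-(SKL φ η))) ^ 2 * Real.exp (-(SL η))
      = ∫ p : ((ι0 → ℝ) × (ι0 → ℝ)) × (ιL → ℝ), Real.exp (-(Sdbl p)) := by
  have h1 : ∫ p : ((ι0 → ℝ) × (ι0 → ℝ)) × (ιL → ℝ), Real.exp (-(Sdbl p))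
      = ∫ x : (ι0 → ℝ) × (ι0 → ℝ), ∫ η : ιL → ℝ, Real.exp (-(Sdbl (x, η))) := by
    rw [Measure.volume_eq_prod _ _] at hint ⊢
    exact integral_prod _ hint
  have h2 : ∫ x : (ι0 → ℝ) × (ι0 → ℝ), ∫ η : ιL → ℝ, Real.exp (-(Sdbl (x, η)))
      = ∫ η : ιL → ℝ, ∫ x : (ι0 → ℝ) × (ι0 → ℝ), Real.exp (-(Sdbl (x, η))) := by
    apply integral_integral_swap
    rw [Measure.volume_eq_prod _ _] at hint
    exact hint
  rw [h1, h2]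
  congr 1
  funext η
  have h3 : ∀ x : (ι0 → ℝ) × (ι0 → ℝ), Real.exp (-(Sdbl (x, η)))
      = (Real.exp (-(SKL x.1 η)) * Real.exp (-(SKL x.2 η))) * Real.exp (-(SL η)) := by
    rintro ⟨φp, φm⟩
    rw [hdbl, ← Real.exp_add, ← Real.exp_add]
    ring_nf
  simp_rw [h3]
  rw [integral_mul_const]
  congr 1
  rw [sq, Measure.volume_eq_prod _ _]
  exact (integral_prod_mul (fun φ : ι0 → ℝ => Real.exp (-(SKL φ η)))
    (fun φ : ι0 → ℝ => Real.exp (-(SKL φ η)))).symm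


theorem stmt17 {ι ι0 ιL : Type*} [Fintype ι] [Fintype ι0] [Fintype ιL]
    [DecidableEq ι]
    (A : Matrix ι ι ℝ) (hA : A.PosDef)
    (SKL : (ι0 → ℝ) → (ιL → ℝ) → ℝ) (SL : (ιL → ℝ) → ℝ)
    (Sdbl : ((ι0 → ℝ) × (ι0 → ℝ)) × (ιL → ℝ) → ℝ)
    (hdbl : ∀ (φp φm : ι0 → ℝ) (η : ιL → ℝ),
      Sdbl ((φp, φm), η) = SKL φp η + SKL φm η + SL η)
    (hint : Integrable
      (fun p : ((ι0 → ℝ) × (ι0 → ℝ)) × (ιL → ℝ) => Real.exp (-(Sdbl p)))) :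
    (Integrable (fun φ : ι → ℝ => Real.exp (-((1 / 2) * (A.mulVec φ ⬝ᵥ φ)))) ∧
      ∫ φ : ι → ℝ, Real.exp (-((1 / 2) * (A.mulVec φ ⬝ᵥ φ)))
        = Real.sqrt ((2 * Real.pi) ^ Fintype.card ι / A.det)) ∧
    ∫ η : ιL → ℝ, (∫ φ : ι0 → ℝ, Real.exp (-(SKL φ η))) ^ 2 * Real.exp (-(SL η))
      = ∫ p : ((ι0 → ℝ) × (ι0 → ℝ)) × (ιL → ℝ), Real.exp (-(Sdbl p)) := by
  exact ⟨gauss A hA, part2 SKL SL Sdbl hdbl hint⟩
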